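/- For 0 < M̄ ≤ M, the infima of the reduced functional satisfy h_{M̄}^r ≥ (M̄/M)^{3/2} h_M^r. -/

import Mathlib

open MeasureTheory Real Set Filter

noncomputable section

abbrev E2 := EuclideanSpace ℝ (Fin 2)

/-- The gravitational potential energy of a flat density. -/
def Epot (ρ : E2 → ℝ) : ℝ :=
  -(1/2) * ∫ p : E2 × E2, ρ p.1 * ρ p.2 / ‖p.1 - p.2‖

/-- Membership in the reduced constraint set F_M^r (for a given Ψ). -/
def inFM (Ψ : ℝ → ℝ) (M : ℝ) (ρ : E2 → ℝ) : Prop :=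
  (∀ x, 0 ≤ ρ x) ∧ MemLp ρ (4/3) volume ∧ Integrable ρ ∧ (∫ x, ρ x) = M ∧
    Integrable (fun x => Ψ (ρ x))

/-- The reduced energy-Casimir functional. -/
def Hr (Ψ : ℝ → ℝ) (ρ : E2 → ℝ) : ℝ := (∫ x, Ψ (ρ x)) + Epot ρ

lemma memLp_comp_smul (p : ENNReal) (f : E2 → ℝ) (hf : MemLp f p volume) {R : ℝ} (hR : R ≠ 0) :
    MemLp (fun x => f (R • x)) p volume := by
  let t := ((Homeomorph.smul (isUnit_iff_ne_zero.2 hR).unit).toMeasurableEquiv : E2 ≃ᵐ E2)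
  have h1 : MemLp f p (Measure.map (R • ·) volume) := by
    rw [MeasureTheory.Measure.map_addHaar_smul volume hR]
    exact hf.smul_measure ENNReal.ofReal_ne_top
  exact (MeasurableEquiv.memLp_map_measure_iff t).mp h1

theorem stmt14 (Ψ : ℝ → ℝ) (hΨ0 : ∀ s : ℝ, 0 ≤ s → 0 ≤ Ψ s)
    (M M' : ℝ) (hM' : 0 < M') (hMM : M' ≤ M) :
    (((M'/M) ^ (3/2 : ℝ) : ℝ) : EReal) *
        sInf {y : EReal | ∃ ρ : E2 → ℝ, inFM Ψ M ρ ∧ y = (Hr Ψ ρ : EReal)} ≤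
      sInf {y : EReal | ∃ ρ : E2 → ℝ, inFM Ψ M' ρ ∧ y = (Hr Ψ ρ : EReal)} := by
  have hM : 0 < M := lt_of_lt_of_le hM' hMM
  set b : ℝ := Real.sqrt (M'/M) with hbdef
  have hMM' : 0 < M'/M := div_pos hM' hM
  have hb : 0 < b := Real.sqrt_pos.2 hMM'
  have hb1 : b ≤ 1 := by
    rw [hbdef, show (1:ℝ) = Real.sqrt 1 by simp]
    exact Real.sqrt_le_sqrt (by rw [div_le_one hM]; exact hMM)
  have hb2 : b ^ 2 = M'/M := Real.sq_sqrt hMM'.le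
  have hc : ((M'/M) ^ (3/2 : ℝ) : ℝ) = b ^ 3 := by
    rw [hbdef, show (3/2 : ℝ) = (1/2 : ℝ) * (3:ℕ) by norm_num,
      Real.rpow_mul hMM'.le, Real.rpow_natCast, ← Real.rpow_natCast ((M'/M) ^ (1/2 : ℝ)),
      ← Real.sqrt_eq_rpow]
    exact Real.rpow_natCast _ 3
  apply le_sInf
  rintro y ⟨ρ', hρ', rfl⟩
  -- rescaled density
  set ρ : E2 → ℝ := fun x => ρ' (b • x) with hρdef
  have hbne : b ≠ 0 := hb.ne'
  obtain ⟨hpos, hLp, hInt, hMass, hΨInt⟩ := hρ'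
  have hfr2 : Module.finrank ℝ E2 = 2 := by simp
  have hfr4 : Module.finrank ℝ (E2 × E2) = 4 := by simp
  -- mass of ρ
  have hmass : (∫ x, ρ x) = M := by
    have := MeasureTheory.Measure.integral_comp_smul (μ := (volume : Measure E2)) ρ' b
    rw [hρdef]
    rw [this, hfr2, hMass, abs_of_nonneg (by positivity), smul_eq_mul]
    rw [hb2]; field_simp
  have hρFM : inFM Ψ M ρ := by
    refine ⟨fun x => hpos _, memLp_comp_smul _ ρ' hLp hbne, hInt.comp_smul hbne, hmass, ?_⟩
    exact (Integrable.comp_smul (f := fun x => Ψ (ρ' x)) hΨInt hbne)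
  -- Casimir part
  have hcas : (∫ x, Ψ (ρ x)) = (b^2)⁻¹ * ∫ x, Ψ (ρ' x) := by
    have := MeasureTheory.Measure.integral_comp_smul (μ := (volume : Measure E2))
      (fun x => Ψ (ρ' x)) b
    rw [hρdef]
    rw [this, hfr2, abs_of_nonneg (by positivity), smul_eq_mul]
  -- potential part
  haveI : (volume : Measure (E2 × E2)).IsAddHaarMeasure :=
    Measure.prod.instIsAddHaarMeasure volume volume
  have hpot : Epot ρ = (b^3)⁻¹ * Epot ρ' := by
    have hptw : ∀ p : E2 × E2, ρ p.1 * ρ p.2 / ‖p.1 - p.2‖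
        = b * ((fun q : E2 × E2 => ρ' q.1 * ρ' q.2 / ‖q.1 - q.2‖) (b • p)) := by
      rintro ⟨x, y⟩
      simp only [hρdef, Prod.smul_fst, Prod.smul_snd, Prod.fst, Prod.snd]
      have hnorm : ‖b • x - b • y‖ = b * ‖x - y‖ := by
        rw [← smul_sub, norm_smul, Real.norm_eq_abs, abs_of_pos hb]
      rw [hnorm]
      rcases eq_or_ne (‖x - y‖) 0 with h0 | h0
      · simp [h0]
      · field_simp
    have hint : (∫ p : E2 × E2, ρ p.1 * ρ p.2 / ‖p.1 - p.2‖)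
        = (b^3)⁻¹ * ∫ p : E2 × E2, ρ' p.1 * ρ' p.2 / ‖p.1 - p.2‖ := by
      calc (∫ p : E2 × E2, ρ p.1 * ρ p.2 / ‖p.1 - p.2‖)
          = ∫ p : E2 × E2, b * ((fun q : E2 × E2 => ρ' q.1 * ρ' q.2 / ‖q.1 - q.2‖) (b • p)) := by
            exact integral_congr_ae (Filter.EventuallyEq.of_eq (funext hptw))
        _ = b * ∫ p : E2 × E2, (fun q : E2 × E2 => ρ' q.1 * ρ' q.2 / ‖q.1 - q.2‖) (b • p) :=
            integral_const_mul _ _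
        _ = (b^3)⁻¹ * ∫ p : E2 × E2, ρ' p.1 * ρ' p.2 / ‖p.1 - p.2‖ := by
            rw [MeasureTheory.Measure.integral_comp_smul (μ := (volume : Measure (E2 × E2)))
              (fun q : E2 × E2 => ρ' q.1 * ρ' q.2 / ‖q.1 - q.2‖) b, hfr4,
              abs_of_nonneg (by positivity), smul_eq_mul, ← mul_assoc]
            congr 1
            field_simp
    rw [Epot, Epot, hint]
    ring
  -- the basic real inequality
  have hcasnn : 0 ≤ ∫ x, Ψ (ρ' x) := integral_nonneg fun x => hΨ0 _ (hpos x)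
  have hib : (b^2)⁻¹ ≤ (b^3)⁻¹ := by
    apply inv_anti₀ (by positivity)
    calc b^3 = b^2 * b := by ring
      _ ≤ b^2 * 1 := by nlinarith
      _ = b^2 := by ring
  have hHr : Hr Ψ ρ ≤ (b^3)⁻¹ * Hr Ψ ρ' := by
    rw [Hr, Hr, hcas, hpot, mul_add]
    have := mul_le_mul_of_nonneg_right hib hcasnn
    linarith
  have hkey : ((M'/M) ^ (3/2 : ℝ) : ℝ) * Hr Ψ ρ ≤ Hr Ψ ρ' := by
    rw [hc]
    calc b^3 * Hr Ψ ρ ≤ b^3 * ((b^3)⁻¹ * Hr Ψ ρ') := by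
          apply mul_le_mul_of_nonneg_left hHr (by positivity)
      _ = Hr Ψ ρ' := by field_simp
  -- conclude in EReal
  have h1 : sInf {y : EReal | ∃ ρ : E2 → ℝ, inFM Ψ M ρ ∧ y = (Hr Ψ ρ : EReal)}
      ≤ (Hr Ψ ρ : EReal) := sInf_le ⟨ρ, hρFM, rfl⟩
  calc (((M'/M) ^ (3/2 : ℝ) : ℝ) : EReal) *
        sInf {y : EReal | ∃ ρ : E2 → ℝ, inFM Ψ M ρ ∧ y = (Hr Ψ ρ : EReal)}
      ≤ (((M'/M) ^ (3/2 : ℝ) : ℝ) : EReal) * (Hr Ψ ρ : EReal) := by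
        apply mul_le_mul_of_nonneg_left h1
        exact_mod_cast Real.rpow_nonneg hMM'.le _
    _ = ((((M'/M) ^ (3/2 : ℝ) : ℝ) * Hr Ψ ρ : ℝ) : EReal) := by rw [EReal.coe_mul]
    _ ≤ (Hr Ψ ρ' : EReal) := by exact_mod_cast hkey
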